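/- arXiv:0804.2869 — 5 statements merged into one kernel-verified Lean document; each statement's English description precedes it below -/
import Mathlib

section
/- Let X and Δ be N×N complex matrices. The function t ↦ exp(X + t·Δ) (matrix exponential) is differentiable at t = 0, with derivative equal to exp(X) · ∫₀¹ exp(−s·X) · Δ · exp(s·X) ds. Equivalently, exp(X+Δ) = exp(X)·(1 + ∫₀¹ exp(−sX) Δ exp(sX) ds) + O(Δ²). -/
open scoped Matrix
open NormedSpace  -- for `exp`

attribute [local instance] Matrix.linftyOpNormedAddCommGroup Matrix.linftyOpNormedRing
  Matrix.linftyOpNormedAlgebra Matrix.instCompleteSpace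

section Aux

variable {N : ℕ}

local notation "Mat" => Matrix (Fin N) (Fin N) ℂ

lemma exp_real_eq_exp_complex (A : Mat) : exp A = exp A :=
  rfl

lemma hasDerivAt_exp_rsmul (A : Mat) (t : ℝ) :
    HasDerivAt (fun s : ℝ => exp (s • A)) (exp (t • A) * A) t := by
  exact hasDerivAt_exp_smul_const (𝕂 := ℝ) A t

lemma duhamel (A B : Mat) :
    exp B - exp A =
      ∫ s in (0:ℝ)..1, exp ((1 - s) • A) * (B - A) * exp (s • B) := by
  have hg : ∀ s : ℝ, HasDerivAt (fun u : ℝ => exp ((1 - u) • A) * exp (u • B))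
      (exp ((1 - s) • A) * (B - A) * exp (s • B)) s := by
    intro s
    have h1 : HasDerivAt (fun u : ℝ => exp ((1 - u) • A))
        ((-1 : ℝ) • (exp ((1 - s) • A) * A)) s := by
      have hinner : HasDerivAt (fun u : ℝ => 1 - u) (-1 : ℝ) s := by
        simpa using (hasDerivAt_id s).const_sub 1
      exact HasDerivAt.scomp s (hasDerivAt_exp_rsmul A (1 - s)) hinner
    have h2 : HasDerivAt (fun u : ℝ => exp (u • B)) (exp (s • B) * B) s :=
      hasDerivAt_exp_rsmul B s
    have h := h1.mul h2
    refine h.congr_deriv ?_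
    symm
    have hc : exp (s • B) * B = B * exp (s • B) :=
      (((Commute.refl B).smul_right s).exp_right).eq.symm
    rw [mul_assoc, hc]
    simp only [neg_one_smul]
    noncomm_ring
  have hcont : Continuous (fun s : ℝ => exp ((1 - s) • A) * (B - A) * exp (s • B)) := by
    exact ((exp_continuous.comp ((continuous_const.sub continuous_id).smul
      continuous_const)).mul continuous_const).mul
      (exp_continuous.comp (continuous_id.smul continuous_const))
  have hFTC := intervalIntegral.integral_eq_sub_of_hasDerivAt
    (fun s _ => hg s) (hcont.intervalIntegrable 0 1)
  simpa [sub_self, zero_smul, exp_zero, one_smul] using hFTC.symm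

end Aux

/-- For `N × N` complex matrices `X` and `Δ` (`N ≥ 1`), the function
`t ↦ exp (X + t • Δ)` is differentiable at `t = 0`, with derivative
`exp X * ∫₀¹ exp (−s • X) * Δ * exp (s • X) ds`. -/
theorem hasDerivAt_exp_perturbation (N : ℕ) (hN : 1 ≤ N)
    (X Δ : Matrix (Fin N) (Fin N) ℂ) :
    HasDerivAt (fun t : ℝ => exp (X + t • Δ))
      (exp X *
        ∫ s in (0:ℝ)..1, exp ((-(s : ℂ)) • X) * Δ * exp ((s : ℂ) • X))
      0 := by
  set H : ℝ → Matrix (Fin N) (Fin N) ℂ := fun t =>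
    ∫ s in (0:ℝ)..1, exp ((1 - s) • X) * Δ * exp (s • (X + t • Δ)) with hHdef
  -- the exact Duhamel identity
  have key : ∀ t : ℝ, exp (X + t • Δ) - exp X = t • H t := by
    intro t
    have h := duhamel X (X + t • Δ)
    simp only [add_sub_cancel_left] at h
    rw [h, hHdef, ← intervalIntegral.integral_smul]
    apply intervalIntegral.integral_congr
    intro s _
    simp [mul_smul_comm, smul_mul_assoc]
  -- continuity of `H`
  have hH : Continuous H := by
    apply intervalIntegral.continuous_parametric_intervalIntegral_of_continuous'
    show Continuous fun p : ℝ × ℝ =>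
      exp ((1 - p.2) • X) * Δ * exp (p.2 • (X + p.1 • Δ))
    exact ((exp_continuous.comp ((continuous_const.sub continuous_snd).smul
      continuous_const)).mul continuous_const).mul
      (exp_continuous.comp (continuous_snd.smul (continuous_const.add
        (continuous_fst.smul continuous_const))))
  -- identify `H 0` with the stated derivative
  have hH0 : H 0 = exp X *
      ∫ s in (0:ℝ)..1, exp ((-(s : ℂ)) • X) * Δ * exp ((s : ℂ) • X) := by
    have hint : @IntervalIntegrable _ PseudoMetricSpace.toUniformSpace.toTopologicalSpace _
        (fun s : ℝ => exp ((-(s : ℂ)) • X) * Δ * exp ((s : ℂ) • X)) MeasureTheory.volume 0 1 := by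
      apply Continuous.intervalIntegrable
      exact ((exp_continuous.comp ((Complex.continuous_ofReal.neg).smul
        continuous_const)).mul continuous_const).mul
        (exp_continuous.comp ((Complex.continuous_ofReal).smul continuous_const))
    have := (ContinuousLinearMap.mul ℂ (Matrix (Fin N) (Fin N) ℂ) (exp X)).intervalIntegral_comp_comm hint
    rw [hHdef]
    simp only [ContinuousLinearMap.mul_apply'] at this
    rw [← this]
    apply intervalIntegral.integral_congr
    intro s _
    have hsmul1 : ((-(s : ℂ)) • X : Matrix (Fin N) (Fin N) ℂ) = (-s : ℝ) • X := by
      rw [← Complex.ofReal_neg, Complex.coe_smul]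
    have hsmul2 : (((s : ℂ)) • X : Matrix (Fin N) (Fin N) ℂ) = s • X := Complex.coe_smul s X
    have hsplit : exp ((1 - s) • X) = exp X * exp ((-s : ℝ) • X) := by
      have : ((1 - s) • X : Matrix (Fin N) (Fin N) ℂ) = X + (-s : ℝ) • X := by
        rw [sub_smul, one_smul, neg_smul, sub_eq_add_neg]
      rw [this]
      exact exp_add_of_commute ((Commute.refl X).smul_right (-s))
    simp only [zero_smul, add_zero, hsmul1, hsmul2, hsplit]
    noncomm_ring
  -- conclude via slopes
  refine hasDerivAt_iff_tendsto_slope.mpr ?_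
  rw [← hH0]
  have heq : ∀ t ∈ ({0}ᶜ : Set ℝ), slope (fun t : ℝ => exp (X + t • Δ)) 0 t = H t := by
    intro t ht
    have ht' : t ≠ 0 := ht
    rw [slope_def_module, zero_smul, add_zero, key t, smul_smul, sub_zero, inv_mul_cancel₀ ht', one_smul]
  refine Filter.Tendsto.congr' ?_ ((hH.continuousAt.tendsto).mono_left nhdsWithin_le_nhds)
  filter_upwards [self_mem_nhdsWithin] with t ht
  exact (heq t ht).symm
end

section
/- Let X be an N×N complex matrix diagonalized as A = S·X·S⁻¹ with A = diag(λ₁,…,λ_N), where the eigenvalues are pairwise distinct, so r_{ij} := λ_i − λ_j ≠ 0 for all i ≠ j. Let Δ be any N×N complex matrix, with Δ₀ and Δ_{(i,j)} defined via B = S·Δ·S⁻¹ as its commuting diagonal component and off-diagonal components. Then for every natural number n ≥ 1, the function t ↦ (X + t·Δ)^n has derivative at t = 0 equal to n·X^{n−1}·Δ₀ + Σ_{i≠j} r_{ij}⁻¹ · (X^n − (X − r_{ij}·I)^n) · Δ_{(i,j)}, where I is the identity matrix. -/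
open scoped Matrix

attribute [local instance] Matrix.linftyOpNormedAddCommGroup Matrix.linftyOpNormedRing
  Matrix.linftyOpNormedAlgebra Matrix.instCompleteSpace

lemma aux_hasDerivAt (N : ℕ) (X Δ : Matrix (Fin N) (Fin N) ℂ) (n : ℕ) :
    HasDerivAt (fun t : ℝ => (X + t • Δ) ^ n)
      (∑ k ∈ Finset.range n, X ^ k * Δ * X ^ (n - 1 - k)) 0 := by
  induction n with
  | zero =>
    simp only [pow_zero, Finset.range_zero, Finset.sum_empty]
    exact hasDerivAt_const (0:ℝ) (1 : Matrix (Fin N) (Fin N) ℂ)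
  | succ n ih =>
    have hg : HasDerivAt (fun t : ℝ => X + t • Δ) Δ 0 := by
      have := (hasDerivAt_const (0:ℝ) X).add ((hasDerivAt_id (0:ℝ)).smul_const Δ)
      simp at this
      exact this
    have h := ih.mul hg
    simp only [pow_succ]
    refine h.congr_deriv ?_
    symm
    simp only [zero_smul, add_zero]
    rw [Finset.sum_range_succ, Finset.sum_mul]
    congr 1
    · apply Finset.sum_congr rfl
      intro k hk
      have hk' : k < n := Finset.mem_range.mp hk
      have : n + 1 - 1 - k = (n - 1 - k) + 1 := by omega
      rw [this, pow_succ, ← mul_assoc]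
    · simp

lemma eig_left (N : ℕ) (M Y : Matrix (Fin N) (Fin N) ℂ) (c : ℂ)
    (h : M * Y = c • Y) (m : ℕ) : M ^ m * Y = c ^ m • Y := by
  induction m with
  | zero => simp
  | succ m ih =>
    rw [pow_succ', mul_assoc, ih, Matrix.mul_smul, h, smul_smul, ← pow_succ]

lemma eig_right (N : ℕ) (M Y : Matrix (Fin N) (Fin N) ℂ) (c : ℂ)
    (h : Y * M = c • Y) (m : ℕ) : Y * M ^ m = c ^ m • Y := by
  induction m with
  | zero => simp
  | succ m ih =>
    rw [pow_succ, ← mul_assoc, ih, Matrix.smul_mul, h, smul_smul, ← pow_succ]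

/-- Let `S * X * S⁻¹ = diag(λ₁,…,λ_N)` with pairwise distinct
eigenvalues (`S` invertible), let `Δ` be arbitrary, and define `B = S * Δ * S⁻¹`,
`Δ₀ = S⁻¹ * B₀ * S` (with `B₀` the diagonal part of `B`) and
`Δ_{(i,j)} = S⁻¹ * (B i j • E_{ij}) * S` for `i ≠ j`.  Then for every `n ≥ 1`, the map
`t ↦ (X + t • Δ)^n` has derivative at `t = 0` equal to
`n • X^(n−1) * Δ₀ + ∑_{i≠j} r_{ij}⁻¹ • ((X^n − (X − r_{ij}•1)^n) * Δ_{(i,j)})`. -/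
theorem hasDerivAt_pow_perturbation (N : ℕ) (X Δ S : Matrix (Fin N) (Fin N) ℂ)
    (hS : IsUnit S.det) (lam : Fin N → ℂ)
    (hdiag : S * X * S⁻¹ = Matrix.diagonal lam)
    (hdistinct : ∀ i j : Fin N, i ≠ j → lam i ≠ lam j)
    (r : Fin N → Fin N → ℂ) (hr : ∀ i j, r i j = lam i - lam j)
    (B B₀ Δ₀ : Matrix (Fin N) (Fin N) ℂ)
    (hB : B = S * Δ * S⁻¹)
    (hB₀ : B₀ = Matrix.diagonal (fun i => B i i))
    (hΔ₀ : Δ₀ = S⁻¹ * B₀ * S)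
    (Δoff : Fin N → Fin N → Matrix (Fin N) (Fin N) ℂ)
    (hΔoff : ∀ i j, i ≠ j →
      Δoff i j = S⁻¹ * (B i j • Matrix.single i j (1 : ℂ)) * S)
    (n : ℕ) (hn : 1 ≤ n) :
    HasDerivAt (fun t : ℝ => (X + t • Δ) ^ n)
      ((n : ℂ) • (X ^ (n - 1) * Δ₀) +
        ∑ p ∈ Finset.univ.filter (fun p : Fin N × Fin N => p.1 ≠ p.2),
          (r p.1 p.2)⁻¹ •
            ((X ^ n - (X - r p.1 p.2 • (1 : Matrix (Fin N) (Fin N) ℂ)) ^ n) *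
              Δoff p.1 p.2))
      0 := by
  have hS1 : S⁻¹ * S = 1 := Matrix.nonsing_inv_mul S hS
  have hS2 : S * S⁻¹ = 1 := Matrix.mul_nonsing_inv S hS
  set A := Matrix.diagonal lam with hA
  have unconj : ∀ M : Matrix (Fin N) (Fin N) ℂ, S⁻¹ * (S * M * S⁻¹) * S = M := by
    intro M
    rw [← mul_assoc, ← mul_assoc, hS1, one_mul, mul_assoc, hS1, mul_one]
  have hX : X = S⁻¹ * A * S := by rw [← unconj X, hdiag]
  have hΔeq : Δ = S⁻¹ * B * S := by rw [hB, unconj]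
  -- conjugation sandwich
  have sandwich : ∀ M M' : Matrix (Fin N) (Fin N) ℂ,
      (S⁻¹ * M * S) * (S⁻¹ * M' * S) = S⁻¹ * (M * M') * S := by
    intro M M'
    simp only [← mul_assoc]
    rw [mul_assoc (S⁻¹ * M) S S⁻¹, hS2, mul_one, mul_assoc S⁻¹ M M']
  -- eigen relations for off-diagonal pieces
  have hE_left : ∀ i j : Fin N,
      A * Matrix.single i j (1:ℂ) = lam i • Matrix.single i j (1:ℂ) := by
    intro i j
    ext a b
    rw [Matrix.diagonal_mul]
    simp only [Matrix.smul_apply, Matrix.single, Matrix.of_apply, smul_eq_mul]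
    by_cases hia : i = a
    · subst hia; simp
    · simp [Ne.symm hia, hia]
  have hE_right : ∀ i j : Fin N,
      Matrix.single i j (1:ℂ) * A = lam j • Matrix.single i j (1:ℂ) := by
    intro i j
    ext a b
    rw [Matrix.mul_diagonal]
    simp only [Matrix.smul_apply, Matrix.single, Matrix.of_apply, smul_eq_mul]
    by_cases hjb : j = b
    · subst hjb; simp [mul_comm]
    · simp [Ne.symm hjb, hjb]
  have hoff_left : ∀ i j : Fin N, i ≠ j → X * Δoff i j = lam i • Δoff i j := by
    intro i j hij
    rw [hΔoff i j hij, hX, sandwich, Matrix.mul_smul, hE_left]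
    simp only [Matrix.mul_smul, Matrix.smul_mul, smul_smul, mul_comm]
  have hoff_right : ∀ i j : Fin N, i ≠ j → Δoff i j * X = lam j • Δoff i j := by
    intro i j hij
    rw [hΔoff i j hij, hX, sandwich, Matrix.smul_mul, hE_right]
    simp only [Matrix.mul_smul, Matrix.smul_mul, smul_smul, mul_comm]
  -- commutation of Δ₀ with X
  have hcomm : Δ₀ * X = X * Δ₀ := by
    rw [hΔ₀, hX, sandwich, sandwich, hB₀, hA, Matrix.diagonal_mul_diagonal,
      Matrix.diagonal_mul_diagonal,
      show (fun i => B i i * lam i) = fun i => lam i * B i i from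
        funext fun i => mul_comm _ _]
  have hcommpow : ∀ m : ℕ, Δ₀ * X ^ m = X ^ m * Δ₀ := by
    intro m
    exact (Commute.pow_right hcomm m).eq
  -- decomposition of B and Δ
  set F := Finset.univ.filter (fun p : Fin N × Fin N => p.1 ≠ p.2) with hF
  have hBdecomp : B = B₀ + ∑ p ∈ F, B p.1 p.2 • Matrix.single p.1 p.2 (1:ℂ) := by
    ext a b
    rw [Matrix.add_apply, Matrix.sum_apply]
    by_cases hab : a = b
    · subst hab
      rw [Finset.sum_eq_zero, hB₀]
      · simp
      · intro p hp
        have hp' : p.1 ≠ p.2 := (Finset.mem_filter.mp hp).2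
        simp only [Matrix.smul_apply, Matrix.single, Matrix.of_apply, smul_eq_mul]
        rw [if_neg, mul_zero]
        rintro ⟨h1, h2⟩
        exact hp' (h1.trans h2.symm)
    · rw [Finset.sum_eq_single_of_mem (a, b), hB₀]
      · simp [Matrix.diagonal_apply_ne _ hab, Matrix.single]
      · simp [hF, hab]
      · intro p hp hpab
        simp only [Matrix.smul_apply, Matrix.single, Matrix.of_apply, smul_eq_mul]
        rw [if_neg, mul_zero]
        rintro ⟨h1, h2⟩
        exact hpab (Prod.ext h1 h2)
  have hΔdecomp : Δ = Δ₀ + ∑ p ∈ F, Δoff p.1 p.2 := by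
    rw [hΔeq, hBdecomp, mul_add, Matrix.mul_sum, add_mul, Finset.sum_mul, ← hΔ₀]
    congr 1
    apply Finset.sum_congr rfl
    intro p hp
    exact (hΔoff p.1 p.2 (Finset.mem_filter.mp hp).2).symm
  -- the derivative
  have hD := aux_hasDerivAt N X Δ n
  convert hD using 1
  rw [hΔdecomp]
  have expand : ∀ k, X ^ k * (Δ₀ + ∑ p ∈ F, Δoff p.1 p.2) * X ^ (n - 1 - k)
      = X ^ k * Δ₀ * X ^ (n - 1 - k) + ∑ p ∈ F, X ^ k * Δoff p.1 p.2 * X ^ (n - 1 - k) := by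
    intro k
    rw [mul_add, add_mul, Matrix.mul_sum, Finset.sum_mul]
  simp only [expand]
  rw [Finset.sum_add_distrib]
  congr 1
  · -- diagonal part
    have h1 : ∀ k ∈ Finset.range n, X ^ k * Δ₀ * X ^ (n - 1 - k) = X ^ (n - 1) * Δ₀ := by
      intro k hk
      have hk' : k < n := Finset.mem_range.mp hk
      rw [mul_assoc, hcommpow, ← mul_assoc, ← pow_add]
      congr 2
      omega
    rw [Finset.sum_congr rfl h1, Finset.sum_const, Finset.card_range, ← Nat.cast_smul_eq_nsmul ℂ]
  · -- off-diagonal part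
    rw [Finset.sum_comm]
    apply Finset.sum_congr rfl
    intro p hp
    have hp' : p.1 ≠ p.2 := (Finset.mem_filter.mp hp).2
    have hrne : r p.1 p.2 ≠ 0 := by
      rw [hr]; exact sub_ne_zero.mpr (hdistinct _ _ hp')
    have hXn : X ^ n * Δoff p.1 p.2 = lam p.1 ^ n • Δoff p.1 p.2 :=
      eig_left N X _ _ (hoff_left p.1 p.2 hp') n
    have hshift : (X - r p.1 p.2 • (1 : Matrix (Fin N) (Fin N) ℂ)) * Δoff p.1 p.2
        = lam p.2 • Δoff p.1 p.2 := by
      rw [sub_mul, Matrix.smul_mul, one_mul, hoff_left p.1 p.2 hp', ← sub_smul, hr]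
      ring_nf
    have hXrn : (X - r p.1 p.2 • (1 : Matrix (Fin N) (Fin N) ℂ)) ^ n * Δoff p.1 p.2
        = lam p.2 ^ n • Δoff p.1 p.2 := eig_left N _ _ _ hshift n
    have hterm : ∀ k, X ^ k * Δoff p.1 p.2 * X ^ (n - 1 - k)
        = (lam p.1 ^ k * lam p.2 ^ (n - 1 - k)) • Δoff p.1 p.2 := by
      intro k
      rw [eig_left N X _ _ (hoff_left p.1 p.2 hp') k, Matrix.smul_mul,
        eig_right N X _ _ (hoff_right p.1 p.2 hp') (n - 1 - k), smul_smul]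
    rw [sub_mul, hXn, hXrn, ← sub_smul, smul_smul]
    simp only [hterm]
    rw [← Finset.sum_smul]
    congr 1
    have hgeom := geom_sum₂_mul (lam p.1) (lam p.2) n
    rw [hr] at hrne ⊢
    rw [inv_mul_eq_div, div_eq_iff hrne]
    exact hgeom.symm
end

section
/- Let X be an N×N complex matrix diagonalized as A = S·X·S⁻¹ with A = diag(λ₁,…,λ_N), where the eigenvalues are pairwise distinct, so r_{ij} := λ_i − λ_j ≠ 0 for all i ≠ j. Let Δ be any N×N complex matrix, with Δ₀ and Δ_{(i,j)} defined via B = S·Δ·S⁻¹ as its commuting diagonal component and off-diagonal components. Then for every polynomial F over ℂ, the function t ↦ F(X + t·Δ) (polynomial evaluated at the matrix X + t·Δ) has derivative at t = 0 equal to F′(X)·Δ₀ + Σ_{i≠j} r_{ij}⁻¹ · (F(X) − F(X − r_{ij}·I)) · Δ_{(i,j)}, where F′ is the formal derivative of F and I is the identity matrix. -/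
open scoped Matrix
open Polynomial

attribute [local instance] Matrix.linftyOpNormedAddCommGroup Matrix.linftyOpNormedRing
  Matrix.linftyOpNormedAlgebra Matrix.instCompleteSpace

variable {N : ℕ}

-- derivative of t ↦ (X + t•Δ)^n at 0
lemma hd_pow (X Δ : Matrix (Fin N) (Fin N) ℂ) (n : ℕ) :
    HasDerivAt (fun t : ℝ => (X + t • Δ) ^ n)
      (∑ k ∈ Finset.range n, X ^ k * Δ * X ^ (n - 1 - k)) 0 := by
  have hline : HasDerivAt (fun t : ℝ => X + t • Δ) Δ 0 := by
    have := ((hasDerivAt_id (0:ℝ)).smul_const Δ).const_add X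
    simp only [id, one_smul] at this
    exact this
  induction n with
  | zero =>
    simp only [pow_zero, Finset.range_zero, Finset.sum_empty]
    exact hasDerivAt_const _ _
  | succ n ih =>
    have h := ih.mul hline
    simp only [zero_smul, add_zero] at h
    have h' : HasDerivAt (fun t : ℝ => (X + t • Δ) ^ (n + 1))
        ((∑ k ∈ Finset.range n, X ^ k * Δ * X ^ (n - 1 - k)) * X + X ^ n * Δ) 0 := h
    convert h' using 1
    rw [Finset.sum_range_succ, Finset.sum_mul]
    congr 1
    · refine Finset.sum_congr rfl fun k hk => ?_
      rw [Finset.mem_range] at hk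
      rw [mul_assoc, mul_assoc, ← pow_succ]
      have : n - 1 - k + 1 = n + 1 - 1 - k := by omega
      rw [this, mul_assoc]
    · simp

lemma hd_aeval (X Δ : Matrix (Fin N) (Fin N) ℂ) (F : Polynomial ℂ) :
    HasDerivAt (fun t : ℝ => aeval (X + t • Δ) F)
      (∑ n ∈ Finset.range (F.natDegree + 1),
        F.coeff n • ∑ k ∈ Finset.range n, X ^ k * Δ * X ^ (n - 1 - k)) 0 := by
  have : (fun t : ℝ => aeval (X + t • Δ) F)
      = fun t : ℝ => ∑ n ∈ Finset.range (F.natDegree + 1),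
          F.coeff n • (X + t • Δ) ^ n := by
    funext t; exact aeval_eq_sum_range _
  rw [this]
  exact HasDerivAt.fun_sum fun n _ => (hd_pow X Δ n).const_smul (F.coeff n)

lemma mconj_pow (S M : Matrix (Fin N) (Fin N) ℂ) (h1 : S⁻¹ * S = 1) (h2 : S * S⁻¹ = 1)
    (n : ℕ) : (S⁻¹ * M * S) ^ n = S⁻¹ * M ^ n * S := by
  induction n with
  | zero => rw [pow_zero, pow_zero, Matrix.mul_one, h1]
  | succ n ih =>
    rw [pow_succ, ih, pow_succ]
    calc S⁻¹ * M ^ n * S * (S⁻¹ * M * S)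
        = S⁻¹ * M ^ n * (S * S⁻¹) * M * S := by noncomm_ring
      _ = S⁻¹ * (M ^ n * M) * S := by rw [h2]; noncomm_ring

lemma conj_aeval (S M : Matrix (Fin N) (Fin N) ℂ) (h1 : S⁻¹ * S = 1) (h2 : S * S⁻¹ = 1)
    (F : Polynomial ℂ) : aeval (S⁻¹ * M * S) F = S⁻¹ * aeval M F * S := by
  rw [aeval_eq_sum_range (p := F) (S⁻¹ * M * S), aeval_eq_sum_range (p := F) M,
    Finset.mul_sum, Finset.sum_mul]
  refine Finset.sum_congr rfl fun n _ => ?_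
  rw [mconj_pow S M h1 h2 n, Matrix.mul_smul, Matrix.smul_mul]

lemma aeval_diag (d : Fin N → ℂ) (F : Polynomial ℂ) :
    aeval (Matrix.diagonal d) F = Matrix.diagonal (fun i => F.eval (d i)) := by
  have : Matrix.diagonal d = Matrix.diagonalAlgHom (n := Fin N) (α := ℂ) ℂ d := rfl
  rw [this, aeval_algHom_apply]
  show Matrix.diagonal (aeval d F) = _
  have h : aeval d F = fun i => F.eval (d i) := by
    funext i
    have h2 := aeval_algHom_apply (Pi.evalAlgHom ℂ (fun _ : Fin N => ℂ) i) d F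
    simp only [Pi.evalAlgHom_apply] at h2
    rw [← h2, aeval_def, eval₂_eq_eval_map]; simp [Algebra.algebraMap_self]
  rw [h]

lemma scal_diag (x : ℂ) (F : Polynomial ℂ) :
    ∑ n ∈ Finset.range (F.natDegree + 1), F.coeff n * (n * x ^ (n - 1))
      = (derivative F).eval x := by
  rw [derivative_eval]
  rw [Polynomial.sum_over_range' F (fun n => by simp) (F.natDegree + 1) (Nat.lt_succ_self _)]
  refine Finset.sum_congr rfl fun n _ => by ring

lemma scal_off (x y : ℂ) (h : x ≠ y) (F : Polynomial ℂ) :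
    ∑ n ∈ Finset.range (F.natDegree + 1), F.coeff n * ((x ^ n - y ^ n) * (x - y)⁻¹)
      = (F.eval x - F.eval y) * (x - y)⁻¹ := by
  rw [eval_eq_sum_range, eval_eq_sum_range, ← Finset.sum_sub_distrib, Finset.sum_mul]
  refine Finset.sum_congr rfl fun n _ => by ring

lemma off_entry (u v : Fin N → ℂ) (c : ℂ) (i j a b : Fin N) :
    ((Matrix.diagonal u - Matrix.diagonal v) * (c • Matrix.single i j (1 : ℂ))) a b
      = (u a - v a) * (c * Matrix.single i j (1 : ℂ) a b) := by
  rw [Matrix.sub_mul, Matrix.sub_apply, Matrix.mul_smul, Matrix.mul_smul,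
    Matrix.smul_apply, Matrix.smul_apply, Matrix.diagonal_mul, Matrix.diagonal_mul,
    smul_eq_mul, smul_eq_mul]
  ring

lemma key_frame (lam : Fin N → ℂ)
    (hdistinct : ∀ i j : Fin N, i ≠ j → lam i ≠ lam j)
    (Bm : Matrix (Fin N) (Fin N) ℂ) (F : Polynomial ℂ) :
    (∑ n ∈ Finset.range (F.natDegree + 1),
        F.coeff n • ∑ k ∈ Finset.range n,
          (Matrix.diagonal lam) ^ k * Bm * (Matrix.diagonal lam) ^ (n - 1 - k))
      = aeval (Matrix.diagonal lam) (derivative F) * Matrix.diagonal (fun i => Bm i i) +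
        ∑ p ∈ Finset.univ.filter (fun p : Fin N × Fin N => p.1 ≠ p.2),
          (lam p.1 - lam p.2)⁻¹ •
            ((aeval (Matrix.diagonal lam) F -
                aeval (Matrix.diagonal lam - (lam p.1 - lam p.2) • (1 : Matrix (Fin N) (Fin N) ℂ)) F) *
              (Bm p.1 p.2 • Matrix.single p.1 p.2 (1 : ℂ))) := by
  have hsub : ∀ c : ℂ, Matrix.diagonal lam - c • (1 : Matrix (Fin N) (Fin N) ℂ)
      = Matrix.diagonal (fun i => lam i - c) := by
    intro c
    ext i j
    by_cases h : i = j <;>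
      simp [Matrix.diagonal_apply, Matrix.one_apply, h]
  ext a b
  -- LHS entry
  have hL : (∑ n ∈ Finset.range (F.natDegree + 1),
      F.coeff n • ∑ k ∈ Finset.range n,
        (Matrix.diagonal lam) ^ k * Bm * (Matrix.diagonal lam) ^ (n - 1 - k)) a b
      = ∑ n ∈ Finset.range (F.natDegree + 1),
          F.coeff n * ∑ k ∈ Finset.range n, lam a ^ k * Bm a b * lam b ^ (n - 1 - k) := by
    rw [Matrix.sum_apply]
    refine Finset.sum_congr rfl fun n _ => ?_
    rw [Matrix.smul_apply, Matrix.sum_apply, smul_eq_mul]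
    congr 1
    refine Finset.sum_congr rfl fun k _ => ?_
    rw [Matrix.diagonal_pow, Matrix.diagonal_pow, Matrix.mul_diagonal, Matrix.diagonal_mul]
    simp [Pi.pow_apply]
  rw [hL]
  -- RHS entry
  rw [Matrix.add_apply, aeval_diag, Matrix.diagonal_mul_diagonal, Matrix.sum_apply]
  by_cases hab : a = b
  · subst hab
    rw [Matrix.diagonal_apply_eq]
    have hz : ∀ p ∈ Finset.univ.filter (fun p : Fin N × Fin N => p.1 ≠ p.2),
        ((lam p.1 - lam p.2)⁻¹ •
          ((aeval (Matrix.diagonal lam) F -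
              aeval (Matrix.diagonal lam - (lam p.1 - lam p.2) • (1 : Matrix (Fin N) (Fin N) ℂ)) F) *
            (Bm p.1 p.2 • Matrix.single p.1 p.2 (1 : ℂ)))) a a = 0 := by
      intro p hp
      rw [Finset.mem_filter] at hp
      have hE : Matrix.single p.1 p.2 (1 : ℂ) a a = 0 :=
        Matrix.single_apply_of_ne _ _ _ _ _ (by rintro ⟨h1, h2⟩; exact hp.2 (h1.trans h2.symm))
      rw [hsub, aeval_diag, aeval_diag, Matrix.smul_apply, off_entry, hE]
      simp
    rw [Finset.sum_eq_zero hz, add_zero]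
    have hc : ∀ n ∈ Finset.range (F.natDegree + 1),
        F.coeff n * ∑ k ∈ Finset.range n, lam a ^ k * Bm a a * lam a ^ (n - 1 - k)
          = F.coeff n * ((n : ℂ) * lam a ^ (n - 1)) * Bm a a := by
      intro n _
      have h2 : ∑ k ∈ Finset.range n, lam a ^ k * Bm a a * lam a ^ (n - 1 - k)
          = ∑ _k ∈ Finset.range n, lam a ^ (n - 1) * Bm a a := by
        refine Finset.sum_congr rfl fun k hk => ?_
        rw [Finset.mem_range] at hk
        rw [mul_right_comm, ← pow_add]
        congr 2
        omega
      rw [h2, Finset.sum_const, Finset.card_range, nsmul_eq_mul]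
      ring
    rw [Finset.sum_congr rfl hc]
    have := scal_diag (lam a) F
    calc ∑ n ∈ Finset.range (F.natDegree + 1), F.coeff n * (↑n * lam a ^ (n - 1)) * Bm a a
        = (∑ n ∈ Finset.range (F.natDegree + 1), F.coeff n * (↑n * lam a ^ (n - 1))) * Bm a a := by
          rw [Finset.sum_mul]
      _ = eval (lam a) (derivative F) * Bm a a := by rw [this]
  · rw [Matrix.diagonal_apply_ne _ hab, zero_add]
    have hkey : ∀ p ∈ Finset.univ.filter (fun p : Fin N × Fin N => p.1 ≠ p.2), p ≠ (a, b) →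
        ((lam p.1 - lam p.2)⁻¹ •
          ((aeval (Matrix.diagonal lam) F -
              aeval (Matrix.diagonal lam - (lam p.1 - lam p.2) • (1 : Matrix (Fin N) (Fin N) ℂ)) F) *
            (Bm p.1 p.2 • Matrix.single p.1 p.2 (1 : ℂ)))) a b = 0 := by
      intro p _ hpne
      have hE : Matrix.single p.1 p.2 (1 : ℂ) a b = 0 :=
        Matrix.single_apply_of_ne _ _ _ _ _ (by rintro ⟨h1, h2⟩; exact hpne (Prod.ext h1 h2))
      rw [hsub, aeval_diag, aeval_diag, Matrix.smul_apply, off_entry, hE]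
      simp
    rw [Finset.sum_eq_single_of_mem (a, b)
      (Finset.mem_filter.mpr ⟨Finset.mem_univ _, hab⟩) hkey]
    have hne : lam a ≠ lam b := hdistinct a b hab
    have hr0 : lam a - lam b ≠ 0 := sub_ne_zero.mpr hne
    rw [hsub, aeval_diag, aeval_diag, Matrix.smul_apply, off_entry,
      Matrix.single_apply_same]
    have hgeo : ∀ n : ℕ, ∑ k ∈ Finset.range n, lam a ^ k * Bm a b * lam b ^ (n - 1 - k)
        = (lam a ^ n - lam b ^ n) * (lam a - lam b)⁻¹ * Bm a b := by
      intro n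
      have hg := geom_sum₂_mul (lam a) (lam b) n
      have h3 : ∑ k ∈ Finset.range n, lam a ^ k * Bm a b * lam b ^ (n - 1 - k)
          = (∑ k ∈ Finset.range n, lam a ^ k * lam b ^ (n - 1 - k)) * Bm a b := by
        rw [Finset.sum_mul]
        exact Finset.sum_congr rfl fun k _ => by ring
      rw [h3]
      congr 1
      field_simp
      linear_combination hg
    have hc : ∀ n ∈ Finset.range (F.natDegree + 1),
        F.coeff n * ∑ k ∈ Finset.range n, lam a ^ k * Bm a b * lam b ^ (n - 1 - k)
          = F.coeff n * ((lam a ^ n - lam b ^ n) * (lam a - lam b)⁻¹) * Bm a b := by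
      intro n _
      rw [hgeo n]; ring
    rw [Finset.sum_congr rfl hc]
    have hso := scal_off (lam a) (lam b) hne F
    have hlb : lam a - (lam a - lam b) = lam b := by ring
    rw [hlb]
    calc ∑ n ∈ Finset.range (F.natDegree + 1),
          F.coeff n * ((lam a ^ n - lam b ^ n) * (lam a - lam b)⁻¹) * Bm a b
        = (∑ n ∈ Finset.range (F.natDegree + 1),
            F.coeff n * ((lam a ^ n - lam b ^ n) * (lam a - lam b)⁻¹)) * Bm a b := by
          rw [Finset.sum_mul]
      _ = (eval (lam a) F - eval (lam b) F) * (lam a - lam b)⁻¹ * Bm a b := by rw [hso]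
      _ = (lam a - lam b)⁻¹ * ((eval (lam a) F - eval (lam b) F) * (Bm a b * 1)) := by ring

/-- With `S * X * S⁻¹ = diag(λ₁,…,λ_N)` (pairwise distinct eigenvalues,
`S` invertible), `Δ` arbitrary, `B = S * Δ * S⁻¹`, `Δ₀ = S⁻¹ * B₀ * S` and
`Δ_{(i,j)} = S⁻¹ * (B i j • E_{ij}) * S`: for every polynomial `F` over `ℂ`, the map
`t ↦ F (X + t • Δ)` has derivative at `t = 0` equal to
`F′(X) * Δ₀ + ∑_{i≠j} r_{ij}⁻¹ • ((F(X) − F(X − r_{ij}•1)) * Δ_{(i,j)})`. -/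
theorem hasDerivAt_polynomial_perturbation (N : ℕ) (X Δ S : Matrix (Fin N) (Fin N) ℂ)
    (hS : IsUnit S.det) (lam : Fin N → ℂ)
    (hdiag : S * X * S⁻¹ = Matrix.diagonal lam)
    (hdistinct : ∀ i j : Fin N, i ≠ j → lam i ≠ lam j)
    (r : Fin N → Fin N → ℂ) (hr : ∀ i j, r i j = lam i - lam j)
    (B B₀ Δ₀ : Matrix (Fin N) (Fin N) ℂ)
    (hB : B = S * Δ * S⁻¹)
    (hB₀ : B₀ = Matrix.diagonal (fun i => B i i))
    (hΔ₀ : Δ₀ = S⁻¹ * B₀ * S)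
    (Δoff : Fin N → Fin N → Matrix (Fin N) (Fin N) ℂ)
    (hΔoff : ∀ i j, i ≠ j →
      Δoff i j = S⁻¹ * (B i j • Matrix.single i j (1 : ℂ)) * S)
    (F : Polynomial ℂ) :
    HasDerivAt (fun t : ℝ => aeval (X + t • Δ) F)
      (aeval X (derivative F) * Δ₀ +
        ∑ p ∈ Finset.univ.filter (fun p : Fin N × Fin N => p.1 ≠ p.2),
          (r p.1 p.2)⁻¹ •
            ((aeval X F - aeval (X - r p.1 p.2 • (1 : Matrix (Fin N) (Fin N) ℂ)) F) *
              Δoff p.1 p.2))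
      0 := by
  have h1 : S⁻¹ * S = 1 := Matrix.nonsing_inv_mul S hS
  have h2 : S * S⁻¹ = 1 := Matrix.mul_nonsing_inv S hS
  have hconjmul : ∀ P Q : Matrix (Fin N) (Fin N) ℂ,
      (S⁻¹ * P * S) * (S⁻¹ * Q * S) = S⁻¹ * (P * Q) * S := by
    intro P Q
    calc (S⁻¹ * P * S) * (S⁻¹ * Q * S) = S⁻¹ * (P * (S * S⁻¹) * Q) * S := by noncomm_ring
      _ = S⁻¹ * (P * Q) * S := by rw [h2, Matrix.mul_one]
  have hX : X = S⁻¹ * (Matrix.diagonal lam) * S := by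
    calc X = 1 * X * 1 := by rw [Matrix.one_mul, Matrix.mul_one]
      _ = (S⁻¹ * S) * X * (S⁻¹ * S) := by rw [h1]
      _ = S⁻¹ * (S * X * S⁻¹) * S := by noncomm_ring
      _ = S⁻¹ * (Matrix.diagonal lam) * S := by rw [hdiag]
  have hΔc : Δ = S⁻¹ * B * S := by
    rw [hB]
    calc Δ = 1 * Δ * 1 := by rw [Matrix.one_mul, Matrix.mul_one]
      _ = (S⁻¹ * S) * Δ * (S⁻¹ * S) := by rw [h1]
      _ = S⁻¹ * (S * Δ * S⁻¹) * S := by noncomm_ring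
  have hD := hd_aeval X Δ F
  have hEq : (∑ n ∈ Finset.range (F.natDegree + 1),
        F.coeff n • ∑ k ∈ Finset.range n, X ^ k * Δ * X ^ (n - 1 - k))
      = aeval X (derivative F) * Δ₀ +
        ∑ p ∈ Finset.univ.filter (fun p : Fin N × Fin N => p.1 ≠ p.2),
          (r p.1 p.2)⁻¹ •
            ((aeval X F - aeval (X - r p.1 p.2 • (1 : Matrix (Fin N) (Fin N) ℂ)) F) *
              Δoff p.1 p.2) := by
    have hterm : ∀ n k : ℕ, X ^ k * Δ * X ^ (n - 1 - k)
        = S⁻¹ * ((Matrix.diagonal lam) ^ k * B * (Matrix.diagonal lam) ^ (n - 1 - k)) * S := by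
      intro n k
      rw [hX, hΔc, mconj_pow S (Matrix.diagonal lam) h1 h2, mconj_pow S (Matrix.diagonal lam) h1 h2, hconjmul, hconjmul]
    have hLHS : (∑ n ∈ Finset.range (F.natDegree + 1),
          F.coeff n • ∑ k ∈ Finset.range n, X ^ k * Δ * X ^ (n - 1 - k))
        = S⁻¹ * (∑ n ∈ Finset.range (F.natDegree + 1),
            F.coeff n • ∑ k ∈ Finset.range n, (Matrix.diagonal lam) ^ k * B * (Matrix.diagonal lam) ^ (n - 1 - k)) * S := by
      rw [Matrix.mul_sum, Matrix.sum_mul]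
      refine Finset.sum_congr rfl fun n _ => ?_
      rw [Finset.sum_congr rfl fun k _ => hterm n k, Matrix.mul_smul, Matrix.smul_mul,
        Matrix.mul_sum, Matrix.sum_mul]
    rw [hLHS, key_frame lam hdistinct B F]
    -- now distribute the conjugation over the RHS
    rw [Matrix.mul_add, Matrix.add_mul]
    congr 1
    · -- diagonal part
      rw [hΔ₀, hB₀, hX, conj_aeval S (Matrix.diagonal lam) h1 h2, hconjmul]
    · -- off-diagonal part
      rw [Matrix.mul_sum, Matrix.sum_mul]
      refine Finset.sum_congr rfl fun p hp => ?_
      rw [Finset.mem_filter] at hp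
      rw [hΔoff p.1 p.2 hp.2, hr p.1 p.2]
      have hsm : X - (lam p.1 - lam p.2) • (1 : Matrix (Fin N) (Fin N) ℂ)
          = S⁻¹ * ((Matrix.diagonal lam) - (lam p.1 - lam p.2) • (1 : Matrix (Fin N) (Fin N) ℂ)) * S := by
        rw [hX, Matrix.mul_sub, Matrix.sub_mul]
        congr 1
        rw [Matrix.mul_smul, Matrix.smul_mul, Matrix.mul_one, h1]
      rw [hsm, hX]
      rw [conj_aeval S (Matrix.diagonal lam) h1 h2]
      rw [conj_aeval S (Matrix.diagonal lam - (lam p.1 - lam p.2) • 1) h1 h2]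
      rw [Matrix.mul_smul, Matrix.smul_mul, ← Matrix.sub_mul, ← Matrix.mul_sub, hconjmul]
  rw [hEq] at hD
  exact hD
end

section
/- Let X be an N×N complex matrix diagonalized as A = S·X·S⁻¹ with A = diag(λ₁,…,λ_N), where the eigenvalues are pairwise distinct, so r_{ij} := λ_i − λ_j ≠ 0 for all i ≠ j. Let Δ be any N×N complex matrix, with Δ₀ and Δ_{(i,j)} defined via B = S·Δ·S⁻¹ as its commuting diagonal component and off-diagonal components. Then the function t ↦ exp(X + t·Δ) (matrix exponential) has derivative at t = 0 equal to exp(X)·Δ₀ + Σ_{i≠j} r_{ij}⁻¹ · (exp(X) − exp(X − r_{ij}·I)) · Δ_{(i,j)}. -/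
open scoped Matrix
open NormedSpace  -- for `exp`

attribute [local instance] Matrix.linftyOpNormedAddCommGroup Matrix.linftyOpNormedRing
  Matrix.linftyOpNormedAlgebra Matrix.instCompleteSpace

namespace ExpPerturbAux

variable {N : ℕ}

lemma diag_mul_E (d : Fin N → ℂ) (i j : Fin N) :
    Matrix.diagonal d * Matrix.single i j (1:ℂ) = d i • Matrix.single i j 1 := by
  ext a b
  by_cases hb : b = j
  · subst hb
    by_cases ha : a = i
    · subst ha; simp
    · simp [Matrix.diagonal_apply_ne _ ha, ha, Ne.symm ha]
  · simp [hb, Ne.symm hb]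

lemma E_mul_diag (d : Fin N → ℂ) (i j : Fin N) :
    Matrix.single i j (1:ℂ) * Matrix.diagonal d = d j • Matrix.single i j 1 := by
  ext a b
  by_cases ha : a = i
  · subst ha
    by_cases hb : b = j
    · subst hb; simp
    · simp [hb, Ne.symm hb]
  · simp [ha, Ne.symm ha]

lemma conj_diag (d : Fin N → ℂ) (i j : Fin N) (hij : i ≠ j) (s : ℂ) :
    (1 - s • Matrix.single i j (1:ℂ)) * Matrix.diagonal d *
      (1 + s • Matrix.single i j (1:ℂ)) =
    Matrix.diagonal d + (s * (d i - d j)) • Matrix.single i j (1:ℂ) := by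
  have hEE : Matrix.single i j (1:ℂ) * Matrix.single i j (1:ℂ) = 0 :=
    by simp [hij.symm]
  simp only [mul_add, add_mul, sub_mul, mul_sub, mul_one, one_mul, smul_mul_assoc,
    mul_smul_comm, diag_mul_E, E_mul_diag, hEE, smul_smul, smul_zero, sub_zero, mul_zero,
    zero_mul]
  module

lemma unit_mul (i j : Fin N) (hij : i ≠ j) (s : ℂ) :
    (1 - s • Matrix.single i j (1:ℂ)) * (1 + s • Matrix.single i j (1:ℂ)) = 1 ∧
    (1 + s • Matrix.single i j (1:ℂ)) * (1 - s • Matrix.single i j (1:ℂ)) = 1 := by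
  have hEE : Matrix.single i j (1:ℂ) * Matrix.single i j (1:ℂ) = 0 :=
    by simp [hij.symm]
  constructor <;>
  · simp only [mul_add, add_mul, sub_mul, mul_sub, mul_one, one_mul, smul_mul_assoc,
      mul_smul_comm, hEE, smul_smul, smul_zero, sub_zero, mul_zero, zero_mul]
    module

lemma exp_diag_plus (lam : Fin N → ℂ) (i j : Fin N) (hij : i ≠ j) (hne : lam i ≠ lam j)
    (c : ℂ) :
    exp (Matrix.diagonal lam + c • Matrix.single i j (1:ℂ)) =
      Matrix.diagonal (fun k => exp (lam k)) +
        (c * (lam i - lam j)⁻¹ * (exp (lam i) - exp (lam j))) •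
          Matrix.single i j (1:ℂ) := by
  set E := Matrix.single i j (1:ℂ) with hE
  set s : ℂ := c * (lam i - lam j)⁻¹ with hs
  have hr : lam i - lam j ≠ 0 := sub_ne_zero.2 hne
  have hu := unit_mul i j hij s
  set u : (Matrix (Fin N) (Fin N) ℂ)ˣ := ⟨1 - s • E, 1 + s • E, hu.1, hu.2⟩ with hudef
  have h1 : (↑u : Matrix (Fin N) (Fin N) ℂ) * Matrix.diagonal lam *
      (↑(u⁻¹) : Matrix (Fin N) (Fin N) ℂ) = Matrix.diagonal lam + c • E := by
    show (1 - s • E) * Matrix.diagonal lam * (1 + s • E) = _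
    rw [conj_diag lam i j hij s]
    congr 1
    rw [hs, mul_assoc, inv_mul_cancel₀ hr, mul_one]
  have h2 := Matrix.exp_units_conj u (Matrix.diagonal lam)
  rw [h1] at h2
  rw [h2, Matrix.exp_diagonal]
  have h3 : (↑u : Matrix (Fin N) (Fin N) ℂ) * Matrix.diagonal (exp lam) *
      (↑(u⁻¹) : Matrix (Fin N) (Fin N) ℂ) =
      Matrix.diagonal (exp lam) + (s * (exp lam i - exp lam j)) • E := by
    show (1 - s • E) * Matrix.diagonal (exp lam) * (1 + s • E) = _
    rw [conj_diag (exp lam) i j hij s]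
  rw [h3]
  simp [Pi.exp_def]

lemma exp_conj_offdiag (S : Matrix (Fin N) (Fin N) ℂ) (hS : IsUnit S.det) (lam : Fin N → ℂ)
    (i j : Fin N) (hij : i ≠ j) (hne : lam i ≠ lam j) (c : ℂ) :
    exp (S⁻¹ * Matrix.diagonal lam * S +
        c • (S⁻¹ * Matrix.single i j (1:ℂ) * S)) =
      S⁻¹ * Matrix.diagonal (fun k => exp (lam k)) * S +
        (c * (lam i - lam j)⁻¹ * (exp (lam i) - exp (lam j))) •
          (S⁻¹ * Matrix.single i j (1:ℂ) * S) := by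
  have hSu : IsUnit S := (Matrix.isUnit_iff_isUnit_det S).mpr hS
  have e3 : S⁻¹ * Matrix.diagonal lam * S + c • (S⁻¹ * Matrix.single i j (1:ℂ) * S)
      = S⁻¹ * (Matrix.diagonal lam + c • Matrix.single i j (1:ℂ)) * S := by
    rw [Matrix.mul_add, Matrix.add_mul, Matrix.mul_smul, Matrix.smul_mul]
  rw [e3, Matrix.exp_conj' S _ hSu, exp_diag_plus lam i j hij hne c,
    Matrix.mul_add, Matrix.add_mul, Matrix.mul_smul, Matrix.smul_mul]

end ExpPerturbAux

open ExpPerturbAux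

/-- With `S * X * S⁻¹ = diag(λ₁,…,λ_N)` (pairwise distinct eigenvalues,
`S` invertible), `Δ` arbitrary, `B = S * Δ * S⁻¹`, `Δ₀ = S⁻¹ * B₀ * S` and
`Δ_{(i,j)} = S⁻¹ * (B i j • E_{ij}) * S`: the map `t ↦ exp (X + t • Δ)` has derivative
at `t = 0` equal to
`exp X * Δ₀ + ∑_{i≠j} r_{ij}⁻¹ • ((exp X − exp (X − r_{ij}•1)) * Δ_{(i,j)})`. -/
theorem hasDerivAt_exp_perturbation_explicit (N : ℕ) (X Δ S : Matrix (Fin N) (Fin N) ℂ)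
    (hS : IsUnit S.det) (lam : Fin N → ℂ)
    (hdiag : S * X * S⁻¹ = Matrix.diagonal lam)
    (hdistinct : ∀ i j : Fin N, i ≠ j → lam i ≠ lam j)
    (r : Fin N → Fin N → ℂ) (hr : ∀ i j, r i j = lam i - lam j)
    (B B₀ Δ₀ : Matrix (Fin N) (Fin N) ℂ)
    (hB : B = S * Δ * S⁻¹)
    (hB₀ : B₀ = Matrix.diagonal (fun i => B i i))
    (hΔ₀ : Δ₀ = S⁻¹ * B₀ * S)
    (Δoff : Fin N → Fin N → Matrix (Fin N) (Fin N) ℂ)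
    (hΔoff : ∀ i j, i ≠ j →
      Δoff i j = S⁻¹ * (B i j • Matrix.single i j (1 : ℂ)) * S) :
    HasDerivAt (fun t : ℝ => exp (X + t • Δ))
      (exp X * Δ₀ +
        ∑ p ∈ Finset.univ.filter (fun p : Fin N × Fin N => p.1 ≠ p.2),
          (r p.1 p.2)⁻¹ •
            ((exp X - exp (X - r p.1 p.2 • (1 : Matrix (Fin N) (Fin N) ℂ))) *
              Δoff p.1 p.2))
      0 := by
  classical
  have hSu : IsUnit S := (Matrix.isUnit_iff_isUnit_det S).mpr hS
  have hS1 : S⁻¹ * S = 1 := Matrix.nonsing_inv_mul S hS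
  have hS2 : S * S⁻¹ = 1 := Matrix.mul_nonsing_inv S hS
  have e1 : ∀ M : Matrix (Fin N) (Fin N) ℂ, S⁻¹ * (S * M * S⁻¹) * S = M := by
    intro M
    simp only [Matrix.mul_assoc, hS1, Matrix.mul_one]
    rw [← Matrix.mul_assoc, hS1, Matrix.one_mul]
  have e2 : ∀ P Q : Matrix (Fin N) (Fin N) ℂ,
      (S⁻¹ * P * S) * (S⁻¹ * Q * S) = S⁻¹ * (P * Q) * S := by
    intro P Q
    simp only [Matrix.mul_assoc]
    rw [← Matrix.mul_assoc S S⁻¹ (Q * S), hS2, Matrix.one_mul]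
  have hX : X = S⁻¹ * Matrix.diagonal lam * S := by
    rw [← hdiag]; exact (e1 X).symm
  have hΔeq : Δ = S⁻¹ * B * S := by rw [hB]; exact (e1 Δ).symm
  have hXexp : exp X = S⁻¹ * Matrix.diagonal (fun k => exp (lam k)) * S := by
    rw [hX, Matrix.exp_conj' S _ hSu, Matrix.exp_diagonal]
    simp [Pi.exp_def]
  -- decomposition of B and Δ
  set off : Finset (Fin N × Fin N) :=
    Finset.univ.filter (fun p : Fin N × Fin N => p.1 ≠ p.2) with hoffs
  have hBdecomp : B = B₀ + ∑ p ∈ off, B p.1 p.2 • Matrix.single p.1 p.2 (1:ℂ) := by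
    ext a b
    rw [hB₀, Matrix.add_apply, Matrix.sum_apply]
    by_cases hab : a = b
    · subst hab
      rw [Matrix.diagonal_apply_eq]
      have hz : ∑ p ∈ off, (B p.1 p.2 • Matrix.single p.1 p.2 (1:ℂ)) a a = 0 := by
        refine Finset.sum_eq_zero ?_
        rintro ⟨p1, p2⟩ hp
        rw [Finset.mem_filter] at hp
        rw [Matrix.smul_apply, Matrix.single_apply_of_ne, smul_zero]
        rintro ⟨h1, h2⟩; exact hp.2 (h1.trans h2.symm)
      rw [hz, add_zero]
    · rw [Matrix.diagonal_apply_ne _ hab, zero_add]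
      rw [Finset.sum_eq_single_of_mem (a, b) (by simp [hoffs, hab])]
      · simp
      · rintro ⟨p1, p2⟩ hp hne
        rw [Matrix.smul_apply, Matrix.single_apply_of_ne, smul_zero]
        rintro ⟨rfl, rfl⟩; exact hne rfl
  have hΔdecomp : Δ = Δ₀ + ∑ p ∈ off, Δoff p.1 p.2 := by
    rw [hΔeq, hBdecomp, Matrix.mul_add, Matrix.add_mul]
    congr 1
    · exact hΔ₀.symm
    · rw [Matrix.mul_sum, Finset.sum_mul]
      refine Finset.sum_congr rfl ?_
      rintro ⟨p1, p2⟩ hp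
      rw [Finset.mem_filter] at hp
      exact (hΔoff p1 p2 hp.2).symm
  -- differentiability of exp and the generic chain rule
  have hLd : DifferentiableAt ℂ exp X := (exp_analytic (𝕂 := ℂ) X).differentiableAt
  set L : Matrix (Fin N) (Fin N) ℂ →L[ℂ] Matrix (Fin N) (Fin N) ℂ := fderiv ℂ exp X with hL
  have hLF : HasFDerivAt exp L X := hLd.hasFDerivAt
  have hgen : ∀ W : Matrix (Fin N) (Fin N) ℂ,
      HasDerivAt (fun t : ℝ => exp (X + t • W)) (L W) 0 := by
    intro W
    have hφ : HasDerivAt (fun t : ℝ => X + t • W) W 0 := by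
      have := ((hasDerivAt_id' (0 : ℝ)).smul_const W).const_add X; simp only [one_smul] at this; exact this
    have h0 : X = X + (0:ℝ) • W := by simp
    have hLF' : HasFDerivAt exp (L.restrictScalars ℝ) (X + (0:ℝ) • W) :=
      h0 ▸ hLF.restrictScalars ℝ
    have := hLF'.comp_hasDerivAt 0 hφ
    exact this
  -- the commuting (diagonal) part
  have hcomm : Commute X Δ₀ := by
    have : X * Δ₀ = Δ₀ * X := by
      rw [hX, hΔ₀, hB₀, e2, e2, Matrix.diagonal_mul_diagonal, Matrix.diagonal_mul_diagonal,
        show (fun i => lam i * B i i) = fun i => B i i * lam i from funext fun k => mul_comm _ _]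
    exact this
  have hd0 : HasDerivAt (fun t : ℝ => exp (X + t • Δ₀)) (exp X * Δ₀) 0 := by
    have heq : (fun t : ℝ => exp (X + t • Δ₀)) = fun t : ℝ => exp X * exp (t • Δ₀) := by
      funext t
      exact exp_add_of_commute (hcomm.smul_right t)
    rw [heq]
    have h1 : HasDerivAt (fun t : ℝ => exp (t • Δ₀)) (exp ((0:ℝ) • Δ₀) * Δ₀) 0 :=
      hasDerivAt_exp_smul_const Δ₀ 0
    simp only [zero_smul, exp_zero, one_mul] at h1
    exact h1.const_mul (exp X)
  have hL0 : L Δ₀ = exp X * Δ₀ := HasDerivAt.unique (hgen Δ₀) hd0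
  -- real scalars act as complex scalars
  have hsmulR : ∀ (t : ℝ) (x : Matrix (Fin N) (Fin N) ℂ), t • x = (t:ℂ) • x := by
    intro t x; rw [← algebraMap_smul ℂ t x, Complex.coe_algebraMap]
  -- off-diagonal parts
  have hoffd : ∀ i j : Fin N, i ≠ j →
      HasDerivAt (fun t : ℝ => exp (X + t • Δoff i j))
        ((r i j)⁻¹ •
          ((exp X - exp (X - r i j • (1 : Matrix (Fin N) (Fin N) ℂ))) * Δoff i j)) 0 := by
    intro i j hij
    have hne : lam i ≠ lam j := hdistinct i j hij
    have hrne : lam i - lam j ≠ 0 := sub_ne_zero.2 hne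
    have hΔoffG : Δoff i j = B i j • (S⁻¹ * Matrix.single i j (1:ℂ) * S) := by
      rw [hΔoff i j hij, Matrix.mul_smul, Matrix.smul_mul]
    -- exp(X) * G = exp(lam i) • G
    have hXG : exp X * (S⁻¹ * Matrix.single i j (1:ℂ) * S)
        = exp (lam i) • (S⁻¹ * Matrix.single i j (1:ℂ) * S) := by
      rw [hXexp, e2, diag_mul_E, Matrix.mul_smul, Matrix.smul_mul]
    have hscal : exp (-(lam i - lam j)) * exp (lam i) = exp (lam j) := by
      rw [← exp_add]; congr 1; ring
    have hXr : exp (X - r i j • (1 : Matrix (Fin N) (Fin N) ℂ))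
        = exp (-(r i j)) • exp X := by
      have h1 : X - r i j • (1 : Matrix (Fin N) (Fin N) ℂ)
          = X + (-(r i j)) • (1 : Matrix (Fin N) (Fin N) ℂ) := by
        rw [neg_smul, ← sub_eq_add_neg]
      have hc : Commute X ((-(r i j)) • (1 : Matrix (Fin N) (Fin N) ℂ)) :=
        (Commute.one_right X).smul_right _
      rw [h1, Matrix.exp_add_of_commute _ _ hc]
      have h2 : (-(r i j)) • (1 : Matrix (Fin N) (Fin N) ℂ)
          = Matrix.diagonal (fun _ => -(r i j)) := by
        ext a b
        rcases eq_or_ne a b with rfl | hab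
        · simp
        · simp [hab]
      rw [h2, Matrix.exp_diagonal]
      have h3 : Matrix.diagonal (exp (fun _ => -(r i j)) : Fin N → ℂ)
          = exp (-(r i j)) • (1 : Matrix (Fin N) (Fin N) ℂ) := by
        ext a b
        rcases eq_or_ne a b with rfl | hab
        · simp [Pi.exp_def]
        · simp [hab]
      rw [h3, Matrix.mul_smul, Matrix.mul_one]
    have hval : (r i j)⁻¹ •
          ((exp X - exp (X - r i j • (1 : Matrix (Fin N) (Fin N) ℂ))) * Δoff i j)
        = (B i j * ((lam i - lam j)⁻¹ * (exp (lam i) - exp (lam j)))) •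
            (S⁻¹ * Matrix.single i j (1:ℂ) * S) := by
      rw [hXr, hΔoffG, hr i j]
      rw [Matrix.mul_smul, sub_mul, Matrix.smul_mul, hXG]
      rw [smul_smul (exp (-(lam i - lam j))) (exp (lam i))
        (S⁻¹ * Matrix.single i j (1:ℂ) * S), hscal]
      rw [← sub_smul, smul_smul, smul_smul]
      congr 1; ring
    have hpt : ∀ t : ℝ, exp (X + t • Δoff i j)
        = exp X + t • ((B i j * ((lam i - lam j)⁻¹ * (exp (lam i) - exp (lam j)))) •
            (S⁻¹ * Matrix.single i j (1:ℂ) * S)) := by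
      intro t
      have ht : t • Δoff i j
          = ((t:ℂ) * B i j) • (S⁻¹ * Matrix.single i j (1:ℂ) * S) := by
        rw [hΔoffG, hsmulR, smul_smul]
      rw [ht, show X = S⁻¹ * Matrix.diagonal lam * S from hX,
        exp_conj_offdiag S hS lam i j hij hne ((t:ℂ) * B i j), ← hX, ← hXexp]
      congr 1
      rw [hsmulR, smul_smul]
      congr 1; ring
    have haff : HasDerivAt (fun t : ℝ => exp X +
        t • ((B i j * ((lam i - lam j)⁻¹ * (exp (lam i) - exp (lam j)))) •
          (S⁻¹ * Matrix.single i j (1:ℂ) * S)))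
        ((B i j * ((lam i - lam j)⁻¹ * (exp (lam i) - exp (lam j)))) •
          (S⁻¹ * Matrix.single i j (1:ℂ) * S)) 0 := by
      have := ((hasDerivAt_id' (0 : ℝ)).smul_const
        ((B i j * ((lam i - lam j)⁻¹ * (exp (lam i) - exp (lam j)))) •
          (S⁻¹ * Matrix.single i j (1:ℂ) * S))).const_add (exp X)
      simp only [one_smul] at this; exact this
    rw [hval]
    have hfun : (fun t : ℝ => exp (X + t • Δoff i j))
        = fun t : ℝ => exp X +
            t • ((B i j * ((lam i - lam j)⁻¹ * (exp (lam i) - exp (lam j)))) •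
              (S⁻¹ * Matrix.single i j (1:ℂ) * S)) := funext hpt
    rw [hfun]
    exact haff
  -- assemble
  have hfinal := hgen Δ
  have hLΔ : L Δ = exp X * Δ₀ +
      ∑ p ∈ off, (r p.1 p.2)⁻¹ •
        ((exp X - exp (X - r p.1 p.2 • (1 : Matrix (Fin N) (Fin N) ℂ))) * Δoff p.1 p.2) := by
    calc L Δ = L (Δ₀ + ∑ p ∈ off, Δoff p.1 p.2) := by rw [← hΔdecomp]
      _ = L Δ₀ + ∑ p ∈ off, L (Δoff p.1 p.2) := by rw [map_add, map_sum]
      _ = _ := by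
          rw [hL0]
          congr 1
          refine Finset.sum_congr rfl ?_
          rintro ⟨p1, p2⟩ hp
          rw [Finset.mem_filter] at hp
          exact HasDerivAt.unique (hgen (Δoff p1 p2)) (hoffd p1 p2 hp.2)
  rw [hLΔ] at hfinal
  exact hfinal
end

section
/- Let x be a quaternion whose imaginary part u = x − Re(x) is nonzero, let r² = ‖u‖² (so u² = −r²·1), and let δ be any quaternion. Define C = (1/(4r²))·(x·δ − δ·x). Then the quaternion δ₁ := δ − (C·x − x·C) commutes with x: x·δ₁ = δ₁·x. Consequently δ decomposes as δ = δ₁ + [C,x] with [δ₁, x] = 0 and [C,x] = δ − δ₁. -/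
open scoped Quaternion

set_option maxHeartbeats 2000000

/-- Let `x` be a real quaternion with nonzero imaginary part
`u = x − Re x`, let `r² = ‖u‖²`, and let `δ` be any quaternion.  With
`C = (1/(4 r²)) • (x*δ − δ*x)`, the quaternion `δ₁ = δ − (C*x − x*C)` commutes
with `x`, and consequently `δ = δ₁ + [C, x]`. -/
theorem quaternion_delta_decomposition (x δ : ℍ[ℝ])
    (u : ℍ[ℝ]) (hu : u = x - (x.re : ℍ[ℝ])) (hu0 : u ≠ 0)
    (r2 : ℝ) (hr2 : r2 = ‖u‖ ^ 2)
    (C : ℍ[ℝ]) (hC : C = (1 / (4 * r2)) • (x * δ - δ * x))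
    (δ₁ : ℍ[ℝ]) (hδ₁ : δ₁ = δ - (C * x - x * C)) :
    x * δ₁ = δ₁ * x ∧ δ = δ₁ + (C * x - x * C) := by
  have hr2' : r2 = x.imI ^ 2 + x.imJ ^ 2 + x.imK ^ 2 := by
    rw [hr2, sq, ← Quaternion.normSq_eq_norm_mul_self, hu]
    simp [Quaternion.normSq_def']
  have hr2ne : r2 ≠ 0 := by
    rw [hr2]
    simpa using hu0
  have h4 : (4 * r2 : ℝ) ≠ 0 := by
    exact mul_ne_zero (by norm_num) hr2ne
  have hC4 : (4 * r2) • C = x * δ - δ * x := by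
    rw [hC, smul_smul, mul_one_div_cancel h4, one_smul]
  have main : x * (C * x - x * C) - (C * x - x * C) * x = x * δ - δ * x := by
    apply smul_right_injective ℍ[ℝ] h4
    show (4 * r2) • (x * (C * x - x * C) - (C * x - x * C) * x) = (4 * r2) • (x * δ - δ * x)
    have h1 : (4 * r2) • (x * (C * x - x * C) - (C * x - x * C) * x)
        = x * (((4 * r2) • C) * x - x * ((4 * r2) • C))
          - (((4 * r2) • C) * x - x * ((4 * r2) • C)) * x := by
      simp only [mul_sub, sub_mul, smul_sub, smul_mul_assoc, mul_smul_comm]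
    rw [h1, hC4]
    ext <;>
      simp only [Quaternion.re_mul, Quaternion.imI_mul, Quaternion.imJ_mul,
        Quaternion.imK_mul, Quaternion.re_sub, Quaternion.imI_sub, Quaternion.imJ_sub,
        Quaternion.imK_sub, Quaternion.re_smul, Quaternion.imI_smul, Quaternion.imJ_smul,
        Quaternion.imK_smul, smul_eq_mul, hr2'] <;>
      ring
  have hsub : x * δ₁ - δ₁ * x = 0 := by
    have hexp : x * δ₁ - δ₁ * x
        = (x * δ - δ * x) - (x * (C * x - x * C) - (C * x - x * C) * x) := by
      rw [hδ₁]; noncomm_ring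
    rw [hexp, main, sub_self]
  exact ⟨sub_eq_zero.mp hsub, by rw [hδ₁]; abel⟩
end
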